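/- Let R be a G-graded ring and P a graded weakly prime ideal of R. If I and J are graded right (or left) ideals of R such that 0 ≠ IJ ⊆ P, then I ⊆ P or J ⊆ P. -/

import Mathlib

variable {G R : Type*} [AddGroup G] [DecidableEq G] [Ring R]

/-- A graded right ideal: an additive subgroup closed under right multiplication that
contains all homogeneous components of its elements. -/
def IsGradedRightIdeal (𝒜 : G → AddSubgroup R) [GradedRing 𝒜] (I : AddSubgroup R) : Prop :=
  (∀ a ∈ I, ∀ r : R, a * r ∈ I) ∧ ∀ a ∈ I, ∀ g : G, (DirectSum.decompose 𝒜 a g : R) ∈ I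

/-- A graded left ideal: an additive subgroup closed under left multiplication that
contains all homogeneous components of its elements. -/
def IsGradedLeftIdeal (𝒜 : G → AddSubgroup R) [GradedRing 𝒜] (I : AddSubgroup R) : Prop :=
  (∀ a ∈ I, ∀ r : R, r * a ∈ I) ∧ ∀ a ∈ I, ∀ g : G, (DirectSum.decompose 𝒜 a g : R) ∈ I

/-- A two-sided ideal is graded if it contains all homogeneous components of its elements. -/
def IsGradedIdeal (𝒜 : G → AddSubgroup R) [GradedRing 𝒜] (P : TwoSidedIdeal R) : Prop :=
  ∀ a ∈ P, ∀ g : G, (DirectSum.decompose 𝒜 a g : R) ∈ P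

/-- Graded weakly prime: a proper graded ideal `P` such that `0 ≠ IJ ⊆ P` for graded
ideals `I, J` implies `I ⊆ P` or `J ⊆ P`. -/
def IsGradedWeaklyPrime (𝒜 : G → AddSubgroup R) [GradedRing 𝒜] (P : TwoSidedIdeal R) : Prop :=
  P ≠ ⊤ ∧ IsGradedIdeal 𝒜 P ∧
    ∀ I J : TwoSidedIdeal R, IsGradedIdeal 𝒜 I → IsGradedIdeal 𝒜 J →
      (∃ a ∈ I, ∃ b ∈ J, a * b ≠ 0) → (∀ a ∈ I, ∀ b ∈ J, a * b ∈ P) →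
      I ≤ P ∨ J ≤ P

open DirectSum

section Aux

variable (𝒜 : G → AddSubgroup R) [GradedRing 𝒜]

/-- The `g`-component of the decomposition, as an additive hom `R →+ R`. -/
private def dcomp (g : G) : R →+ R :=
  (𝒜 g).subtype.comp ((DFinsupp.evalAddMonoidHom g).comp (decomposeAddEquiv 𝒜).toAddMonoidHom)

private lemma dcomp_apply (g : G) (x : R) : dcomp 𝒜 g x = (decompose 𝒜 x g : R) := rfl

private lemma decompose_mul_mem {M : AddSubgroup R} {r a : R}
    (h : ∀ i j : G, (decompose 𝒜 r i : R) * (decompose 𝒜 a j : R) ∈ M) (g : G) :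
    (decompose 𝒜 (r * a) g : R) ∈ M := by
  classical
  have h1 : r * a = ∑ i ∈ (decompose 𝒜 r).support, ∑ j ∈ (decompose 𝒜 a).support,
      (decompose 𝒜 r i : R) * (decompose 𝒜 a j : R) := by
    conv_lhs => rw [← DirectSum.sum_support_decompose 𝒜 r,
      ← DirectSum.sum_support_decompose 𝒜 a]
    rw [Finset.sum_mul_sum]
  rw [← dcomp_apply, h1, map_sum]
  refine sum_mem fun i _ => ?_
  rw [map_sum]
  refine sum_mem fun j _ => ?_
  rw [dcomp_apply]
  have hmem : (decompose 𝒜 r i : R) * (decompose 𝒜 a j : R) ∈ 𝒜 (i + j) :=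
    SetLike.mul_mem_graded (SetLike.coe_mem _) (SetLike.coe_mem _)
  by_cases hg : i + j = g
  · rw [← hg, decompose_of_mem_same 𝒜 hmem]; exact h i j
  · rw [decompose_of_mem_ne 𝒜 hmem hg]; exact M.zero_mem

end Aux

/-- The additive subgroup generated by left multiples of elements of `I`. -/
private def rCl (I : AddSubgroup R) : AddSubgroup R :=
  AddSubgroup.closure {x | ∃ r : R, ∃ a ∈ I, x = r * a}

/-- The additive subgroup generated by right multiples of elements of `I`. -/
private def lCl (I : AddSubgroup R) : AddSubgroup R :=
  AddSubgroup.closure {x | ∃ r : R, ∃ a ∈ I, x = a * r}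

private lemma rCl_gen {I : AddSubgroup R} (r : R) {a : R} (ha : a ∈ I) : r * a ∈ rCl I :=
  AddSubgroup.subset_closure ⟨r, a, ha, rfl⟩

private lemma lCl_gen {I : AddSubgroup R} (r : R) {a : R} (ha : a ∈ I) : a * r ∈ lCl I :=
  AddSubgroup.subset_closure ⟨r, a, ha, rfl⟩

private lemma rCl_mul_left {I : AddSubgroup R} (r : R) {m : R} (hm : m ∈ rCl I) :
    r * m ∈ rCl I := by
  induction hm using AddSubgroup.closure_induction with
  | mem x hx => obtain ⟨s, a, ha, rfl⟩ := hx; rw [← mul_assoc]; exact rCl_gen _ ha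
  | zero => rw [mul_zero]; exact (rCl I).zero_mem
  | add x y _ _ hx hy => rw [mul_add]; exact (rCl I).add_mem hx hy
  | neg x _ hx => rw [mul_neg]; exact (rCl I).neg_mem hx

private lemma lCl_mul_right {I : AddSubgroup R} (r : R) {m : R} (hm : m ∈ lCl I) :
    m * r ∈ lCl I := by
  induction hm using AddSubgroup.closure_induction with
  | mem x hx => obtain ⟨s, a, ha, rfl⟩ := hx; rw [mul_assoc]; exact lCl_gen _ ha
  | zero => rw [zero_mul]; exact (lCl I).zero_mem
  | add x y _ _ hx hy => rw [add_mul]; exact (lCl I).add_mem hx hy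
  | neg x _ hx => rw [neg_mul]; exact (lCl I).neg_mem hx

private lemma rCl_mul_right {I : AddSubgroup R} (hIr : ∀ a ∈ I, ∀ r : R, a * r ∈ I)
    (r : R) {m : R} (hm : m ∈ rCl I) : m * r ∈ rCl I := by
  induction hm using AddSubgroup.closure_induction with
  | mem x hx => obtain ⟨s, a, ha, rfl⟩ := hx; rw [mul_assoc]; exact rCl_gen _ (hIr a ha r)
  | zero => rw [zero_mul]; exact (rCl I).zero_mem
  | add x y _ _ hx hy => rw [add_mul]; exact (rCl I).add_mem hx hy
  | neg x _ hx => rw [neg_mul]; exact (rCl I).neg_mem hx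

private lemma lCl_mul_left {I : AddSubgroup R} (hIl : ∀ a ∈ I, ∀ r : R, r * a ∈ I)
    (r : R) {m : R} (hm : m ∈ lCl I) : r * m ∈ lCl I := by
  induction hm using AddSubgroup.closure_induction with
  | mem x hx => obtain ⟨s, a, ha, rfl⟩ := hx; rw [← mul_assoc]; exact lCl_gen _ (hIl a ha r)
  | zero => rw [mul_zero]; exact (lCl I).zero_mem
  | add x y _ _ hx hy => rw [mul_add]; exact (lCl I).add_mem hx hy
  | neg x _ hx => rw [mul_neg]; exact (lCl I).neg_mem hx

section Graded

variable (𝒜 : G → AddSubgroup R) [GradedRing 𝒜]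

private lemma rCl_graded {I : AddSubgroup R}
    (hIg : ∀ a ∈ I, ∀ g : G, (decompose 𝒜 a g : R) ∈ I) {m : R} (hm : m ∈ rCl I) (g : G) :
    (decompose 𝒜 m g : R) ∈ rCl I := by
  induction hm using AddSubgroup.closure_induction generalizing g with
  | mem x hx =>
    obtain ⟨s, a, ha, rfl⟩ := hx
    exact decompose_mul_mem 𝒜 (fun i j => rCl_gen _ (hIg a ha j)) g
  | zero => rw [decompose_zero]; exact (rCl I).zero_mem
  | add x y _ _ hx hy =>
    rw [← dcomp_apply, map_add, dcomp_apply, dcomp_apply]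
    exact (rCl I).add_mem (hx g) (hy g)
  | neg x _ hx =>
    rw [← dcomp_apply, map_neg, dcomp_apply]
    exact (rCl I).neg_mem (hx g)

private lemma lCl_graded {I : AddSubgroup R}
    (hIg : ∀ a ∈ I, ∀ g : G, (decompose 𝒜 a g : R) ∈ I) {m : R} (hm : m ∈ lCl I) (g : G) :
    (decompose 𝒜 m g : R) ∈ lCl I := by
  induction hm using AddSubgroup.closure_induction generalizing g with
  | mem x hx =>
    obtain ⟨s, a, ha, rfl⟩ := hx
    exact decompose_mul_mem 𝒜 (fun i j => lCl_gen _ (hIg a ha i)) g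
  | zero => rw [decompose_zero]; exact (lCl I).zero_mem
  | add x y _ _ hx hy =>
    rw [← dcomp_apply, map_add, dcomp_apply, dcomp_apply]
    exact (lCl I).add_mem (hx g) (hy g)
  | neg x _ hx =>
    rw [← dcomp_apply, map_neg, dcomp_apply]
    exact (lCl I).neg_mem (hx g)

end Graded

private lemma rExt_mul_left {I : AddSubgroup R} {x y : R} (hy : y ∈ I ⊔ rCl I) :
    x * y ∈ I ⊔ rCl I := by
  obtain ⟨a, ha, m, hm, rfl⟩ := AddSubgroup.mem_sup.mp hy
  rw [mul_add]
  exact AddSubgroup.add_mem _ (AddSubgroup.mem_sup_right (rCl_gen x ha))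
    (AddSubgroup.mem_sup_right (rCl_mul_left x hm))

private lemma rExt_mul_right {I : AddSubgroup R} (hIr : ∀ a ∈ I, ∀ r : R, a * r ∈ I)
    {x y : R} (hx : x ∈ I ⊔ rCl I) : x * y ∈ I ⊔ rCl I := by
  obtain ⟨a, ha, m, hm, rfl⟩ := AddSubgroup.mem_sup.mp hx
  rw [add_mul]
  exact AddSubgroup.add_mem _ (AddSubgroup.mem_sup_left (hIr a ha y))
    (AddSubgroup.mem_sup_right (rCl_mul_right hIr y hm))

private lemma lExt_mul_right {I : AddSubgroup R} {x y : R} (hx : x ∈ I ⊔ lCl I) :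
    x * y ∈ I ⊔ lCl I := by
  obtain ⟨a, ha, m, hm, rfl⟩ := AddSubgroup.mem_sup.mp hx
  rw [add_mul]
  exact AddSubgroup.add_mem _ (AddSubgroup.mem_sup_right (lCl_gen y ha))
    (AddSubgroup.mem_sup_right (lCl_mul_right y hm))

private lemma lExt_mul_left {I : AddSubgroup R} (hIl : ∀ a ∈ I, ∀ r : R, r * a ∈ I)
    {x y : R} (hy : y ∈ I ⊔ lCl I) : x * y ∈ I ⊔ lCl I := by
  obtain ⟨a, ha, m, hm, rfl⟩ := AddSubgroup.mem_sup.mp hy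
  rw [mul_add]
  exact AddSubgroup.add_mem _ (AddSubgroup.mem_sup_left (hIl a ha x))
    (AddSubgroup.mem_sup_right (lCl_mul_left hIl x hm))

private lemma rExt_graded (𝒜 : G → AddSubgroup R) [GradedRing 𝒜] {I : AddSubgroup R}
    (hIg : ∀ a ∈ I, ∀ g : G, (DirectSum.decompose 𝒜 a g : R) ∈ I) {x : R}
    (hx : x ∈ I ⊔ rCl I) (g : G) : (DirectSum.decompose 𝒜 x g : R) ∈ I ⊔ rCl I := by
  obtain ⟨a, ha, m, hm, rfl⟩ := AddSubgroup.mem_sup.mp hx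
  rw [← dcomp_apply, map_add, dcomp_apply, dcomp_apply]
  exact AddSubgroup.add_mem _ (AddSubgroup.mem_sup_left (hIg a ha g))
    (AddSubgroup.mem_sup_right (rCl_graded 𝒜 hIg hm g))

private lemma lExt_graded (𝒜 : G → AddSubgroup R) [GradedRing 𝒜] {I : AddSubgroup R}
    (hIg : ∀ a ∈ I, ∀ g : G, (DirectSum.decompose 𝒜 a g : R) ∈ I) {x : R}
    (hx : x ∈ I ⊔ lCl I) (g : G) : (DirectSum.decompose 𝒜 x g : R) ∈ I ⊔ lCl I := by
  obtain ⟨a, ha, m, hm, rfl⟩ := AddSubgroup.mem_sup.mp hx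
  rw [← dcomp_apply, map_add, dcomp_apply, dcomp_apply]
  exact AddSubgroup.add_mem _ (AddSubgroup.mem_sup_left (hIg a ha g))
    (AddSubgroup.mem_sup_right (lCl_graded 𝒜 hIg hm g))

private lemma rCl_right_mulP (P : TwoSidedIdeal R) {I J : AddSubgroup R}
    (hIr : ∀ a ∈ I, ∀ r : R, a * r ∈ I)
    (hsub : ∀ a ∈ I, ∀ b ∈ J, a * b ∈ P) {a : R} (ha : a ∈ I) {n : R} (hn : n ∈ rCl J) :
    a * n ∈ P := by
  induction hn using AddSubgroup.closure_induction with
  | mem x hx => obtain ⟨s, b, hb, rfl⟩ := hx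
                rw [← mul_assoc]; exact hsub _ (hIr a ha s) b hb
  | zero => rw [mul_zero]; exact P.zero_mem
  | add x y _ _ hx hy => rw [mul_add]; exact P.add_mem hx hy
  | neg x _ hx => rw [mul_neg]; exact P.neg_mem hx

private lemma rCl_left_mulP (P : TwoSidedIdeal R) {I : AddSubgroup R} {y : R}
    (hy : ∀ a ∈ I, a * y ∈ P) {m : R} (hm : m ∈ rCl I) : m * y ∈ P := by
  induction hm using AddSubgroup.closure_induction with
  | mem x hx => obtain ⟨r, a, ha, rfl⟩ := hx
                rw [mul_assoc]; exact P.mul_mem_left r _ (hy a ha)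
  | zero => rw [zero_mul]; exact P.zero_mem
  | add x y _ _ hx hy => rw [add_mul]; exact P.add_mem hx hy
  | neg x _ hx => rw [neg_mul]; exact P.neg_mem hx

private lemma rExt_mul_mem (P : TwoSidedIdeal R) {I J : AddSubgroup R}
    (hIr : ∀ a ∈ I, ∀ r : R, a * r ∈ I)
    (hsub : ∀ a ∈ I, ∀ b ∈ J, a * b ∈ P) {x y : R}
    (hx : x ∈ I ⊔ rCl I) (hy : y ∈ J ⊔ rCl J) : x * y ∈ P := by
  obtain ⟨a, ha, m, hm, rfl⟩ := AddSubgroup.mem_sup.mp hx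
  obtain ⟨b, hb, n, hn, rfl⟩ := AddSubgroup.mem_sup.mp hy
  have hy' : ∀ a' ∈ I, a' * (b + n) ∈ P := fun a' ha' => by
    rw [mul_add]
    exact P.add_mem (hsub a' ha' b hb) (rCl_right_mulP P hIr hsub ha' hn)
  rw [add_mul]
  exact P.add_mem (hy' a ha) (rCl_left_mulP P hy' hm)

private lemma lCl_mulP (P : TwoSidedIdeal R) {J : AddSubgroup R} {x : R}
    (hx : ∀ b ∈ J, x * b ∈ P) {n : R} (hn : n ∈ lCl J) : x * n ∈ P := by
  induction hn using AddSubgroup.closure_induction with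
  | mem y hy => obtain ⟨s, b, hb, rfl⟩ := hy
                rw [← mul_assoc]; exact P.mul_mem_right _ s (hx b hb)
  | zero => rw [mul_zero]; exact P.zero_mem
  | add x y _ _ hx hy => rw [mul_add]; exact P.add_mem hx hy
  | neg x _ hx => rw [mul_neg]; exact P.neg_mem hx

private lemma lExt_mul_mem (P : TwoSidedIdeal R) {I J : AddSubgroup R}
    (hJl : ∀ a ∈ J, ∀ r : R, r * a ∈ J)
    (hsub : ∀ a ∈ I, ∀ b ∈ J, a * b ∈ P) {x y : R}
    (hx : x ∈ I ⊔ lCl I) (hy : y ∈ J ⊔ lCl J) : x * y ∈ P := by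
  have hA : ∀ a ∈ I, ∀ y' ∈ J ⊔ lCl J, a * y' ∈ P := by
    intro a ha y' hy'
    obtain ⟨b, hb, n, hn, rfl⟩ := AddSubgroup.mem_sup.mp hy'
    rw [mul_add]
    exact P.add_mem (hsub a ha b hb) (lCl_mulP P (hsub a ha) hn)
  obtain ⟨a, ha, m, hm, rfl⟩ := AddSubgroup.mem_sup.mp hx
  rw [add_mul]
  refine P.add_mem (hA a ha _ hy) ?_
  clear hx ha
  induction hm using AddSubgroup.closure_induction generalizing y with
  | mem x hx => obtain ⟨r, a', ha', rfl⟩ := hx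
                rw [mul_assoc]
                exact hA a' ha' _ (lExt_mul_left hJl hy)
  | zero => rw [zero_mul]; exact P.zero_mem
  | add x z _ _ hx hz => rw [add_mul]; exact P.add_mem (hx hy) (hz hy)
  | neg x _ hx => rw [neg_mul]; exact P.neg_mem (hx hy)


/-- If `P` is a graded weakly prime ideal and `I, J` are graded right (left) ideals with
`0 ≠ IJ ⊆ P`, then `I ⊆ P` or `J ⊆ P`. -/
theorem stmt0 (𝒜 : G → AddSubgroup R) [GradedRing 𝒜] (P : TwoSidedIdeal R)
    (hP : IsGradedWeaklyPrime 𝒜 P) (I J : AddSubgroup R)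
    (hIJ : (IsGradedRightIdeal 𝒜 I ∧ IsGradedRightIdeal 𝒜 J) ∨
           (IsGradedLeftIdeal 𝒜 I ∧ IsGradedLeftIdeal 𝒜 J))
    (hne : ∃ a ∈ I, ∃ b ∈ J, a * b ≠ 0)
    (hsub : ∀ a ∈ I, ∀ b ∈ J, a * b ∈ P) :
    (∀ a ∈ I, a ∈ P) ∨ (∀ b ∈ J, b ∈ P) := by
  obtain ⟨hPtop, hPg, hPwp⟩ := hP
  obtain ⟨a0, ha0, b0, hb0, hab0⟩ := hne
  rcases hIJ with ⟨hI, hJ⟩ | ⟨hI, hJ⟩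
  · rcases hPwp
        (TwoSidedIdeal.mk' ↑(I ⊔ rCl I) (AddSubgroup.zero_mem _)
          (fun hx hy => AddSubgroup.add_mem _ hx hy) (fun hx => AddSubgroup.neg_mem _ hx)
          (fun hy => rExt_mul_left hy) (fun hx => rExt_mul_right hI.1 hx))
        (TwoSidedIdeal.mk' ↑(J ⊔ rCl J) (AddSubgroup.zero_mem _)
          (fun hx hy => AddSubgroup.add_mem _ hx hy) (fun hx => AddSubgroup.neg_mem _ hx)
          (fun hy => rExt_mul_left hy) (fun hx => rExt_mul_right hJ.1 hx))
        (fun x hx g => by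
          simp only [TwoSidedIdeal.mem_mk'] at hx ⊢
          exact rExt_graded 𝒜 hI.2 hx g)
        (fun x hx g => by
          simp only [TwoSidedIdeal.mem_mk'] at hx ⊢
          exact rExt_graded 𝒜 hJ.2 hx g)
        ⟨a0, by simpa using AddSubgroup.mem_sup_left ha0,
          b0, by simpa using AddSubgroup.mem_sup_left hb0, hab0⟩
        (fun x hx y hy =>
          rExt_mul_mem P hI.1 hsub (by simpa using hx) (by simpa using hy))
      with h | h
    · exact Or.inl fun a ha => h (by simpa using AddSubgroup.mem_sup_left ha)
    · exact Or.inr fun b hb => h (by simpa using AddSubgroup.mem_sup_left hb)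
  · rcases hPwp
        (TwoSidedIdeal.mk' ↑(I ⊔ lCl I) (AddSubgroup.zero_mem _)
          (fun hx hy => AddSubgroup.add_mem _ hx hy) (fun hx => AddSubgroup.neg_mem _ hx)
          (fun hy => lExt_mul_left hI.1 hy) (fun hx => lExt_mul_right hx))
        (TwoSidedIdeal.mk' ↑(J ⊔ lCl J) (AddSubgroup.zero_mem _)
          (fun hx hy => AddSubgroup.add_mem _ hx hy) (fun hx => AddSubgroup.neg_mem _ hx)
          (fun hy => lExt_mul_left hJ.1 hy) (fun hx => lExt_mul_right hx))
        (fun x hx g => by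
          simp only [TwoSidedIdeal.mem_mk'] at hx ⊢
          exact lExt_graded 𝒜 hI.2 hx g)
        (fun x hx g => by
          simp only [TwoSidedIdeal.mem_mk'] at hx ⊢
          exact lExt_graded 𝒜 hJ.2 hx g)
        ⟨a0, by simpa using AddSubgroup.mem_sup_left ha0,
          b0, by simpa using AddSubgroup.mem_sup_left hb0, hab0⟩
        (fun x hx y hy =>
          lExt_mul_mem P hJ.1 hsub (by simpa using hx) (by simpa using hy))
      with h | h
    · exact Or.inl fun a ha => h (by simpa using AddSubgroup.mem_sup_left ha)
    · exact Or.inr fun b hb => h (by simpa using AddSubgroup.mem_sup_left hb)
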